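/- arXiv:2105.10679 — 4 statements merged into one kernel-verified Lean document; each statement's English description precedes it below -/
import Mathlib

section
/- Let e be an equivalence relation on a finite set Ω and ρ the induced map sending a relation r on Ω to the relation ρ(r) = {(αe, βe) : (α,β) ∈ r} on the quotient Ω/e. If e commutes with relations r and s on Ω (i.e., e·r = r·e and e·s = s·e), then ρ(r·s) = ρ(r)·ρ(s). -/
open Set

def rcomp {Ω : Type*} (r s : Set (Ω × Ω)) : Set (Ω × Ω) :=
  {p | ∃ γ, (p.1, γ) ∈ r ∧ (γ, p.2) ∈ s}

def rconv {Ω : Type*} (r : Set (Ω × Ω)) : Set (Ω × Ω) := {p | (p.2, p.1) ∈ r}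

def rdiag (Ω : Type*) : Set (Ω × Ω) := {p | p.1 = p.2}

def IsEquivRel {Ω : Type*} (e : Set (Ω × Ω)) : Prop :=
  Equivalence (fun a b => (a, b) ∈ e)

/-- The smallest equivalence relation containing `r`. -/
def eqvClosure {Ω : Type*} (r : Set (Ω × Ω)) : Set (Ω × Ω) :=
  ⋂₀ {e | IsEquivRel e ∧ r ⊆ e}

/-- Join of two equivalence relations. -/
def rjoin {Ω : Type*} (e f : Set (Ω × Ω)) : Set (Ω × Ω) := eqvClosure (e ∪ f)

def IsClass {Ω : Type*} (e : Set (Ω × Ω)) (Δ : Set Ω) : Prop :=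
  ∃ α, Δ = {β | (α, β) ∈ e}

def setoidRel {Ω : Type*} (e : Setoid Ω) : Set (Ω × Ω) := {p | e.r p.1 p.2}

/-- The relation induced on the quotient `Ω/e` by a relation `r` on `Ω`. -/
def qmap {Ω : Type*} (e : Setoid Ω) (r : Set (Ω × Ω)) :
    Set (Quotient e × Quotient e) :=
  {p | ∃ a b : Ω, Quotient.mk e a = p.1 ∧ Quotient.mk e b = p.2 ∧ (a, b) ∈ r}

/-- Tensor product of relations. -/
def tensorRel {m : ℕ} {Ω : Fin m → Type*} (s : ∀ i, Set (Ω i × Ω i)) :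
    Set ((∀ i, Ω i) × (∀ i, Ω i)) :=
  {p | ∀ i, (p.1 i, p.2 i) ∈ s i}

def tensor2 {Ω₁ Ω₂ : Type*} (s₁ : Set (Ω₁ × Ω₁)) (s₂ : Set (Ω₂ × Ω₂)) :
    Set ((Ω₁ × Ω₂) × (Ω₁ × Ω₂)) :=
  {p | (p.1.1, p.2.1) ∈ s₁ ∧ (p.1.2, p.2.2) ∈ s₂}

/-- `PP e I` is the join of the equivalence relations `e i`, `i ∈ I`. -/
def PP {Ω : Type*} {m : ℕ} (e : Fin m → Set (Ω × Ω)) (I : Set (Fin m)) :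
    Set (Ω × Ω) :=
  eqvClosure (⋃ i ∈ I, e i)

/-- An atomic Cartesian decomposition, given as a family of equivalence relations. -/
def IsACDfam {Ω : Type*} {m : ℕ} (e : Fin m → Set (Ω × Ω)) : Prop :=
  0 < m ∧ (∀ i, IsEquivRel (e i)) ∧ (∀ i, e i ≠ rdiag Ω) ∧
  (∀ i j, rcomp (e i) (e j) = rcomp (e j) (e i)) ∧
  (∀ i, e i ∩ PP e ({i}ᶜ) = rdiag Ω) ∧
  (∀ i, rjoin (e i) (PP e ({i}ᶜ)) = Set.univ)

/-- Join of a set of relations. -/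
def joinAll {Ω : Type*} (B : Set (Set (Ω × Ω))) : Set (Ω × Ω) := eqvClosure (⋃₀ B)

/-- The `P`-complement of `e`: the join of the members of `P` other than `e`. -/
def pcompl {Ω : Type*} (P : Set (Set (Ω × Ω))) (e : Set (Ω × Ω)) : Set (Ω × Ω) :=
  joinAll (P \ {e})

/-- An atomic Cartesian decomposition, given as a set of equivalence relations. -/
def IsACD {Ω : Type*} (P : Set (Set (Ω × Ω))) : Prop :=
  P.Nonempty ∧ (∀ e ∈ P, IsEquivRel e ∧ e ≠ rdiag Ω) ∧
  (∀ e ∈ P, ∀ f ∈ P, rcomp e f = rcomp f e) ∧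
  (∀ e ∈ P, e ∩ pcompl P e = rdiag Ω ∧ rjoin e (pcompl P e) = Set.univ)

def IsPartitionOf {α : Type*} (P : Set α) (C : Set (Set α)) : Prop :=
  (∀ B ∈ C, B.Nonempty) ∧ (∀ B ∈ C, ∀ B' ∈ C, B ≠ B' → Disjoint B B') ∧ ⋃₀ C = P

/-- A coherent configuration on `Ω`. -/
structure CohCfg (Ω : Type*) where
  S : Set (Set (Ω × Ω))
  empty_not_mem : ∅ ∉ S
  cover : ∀ p : Ω × Ω, ∃ s ∈ S, p ∈ s
  pairwise_disjoint : ∀ s ∈ S, ∀ t ∈ S, s ≠ t → Disjoint s t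
  diag_union : ∀ s ∈ S, (s ∩ rdiag Ω).Nonempty → s ⊆ rdiag Ω
  conv_mem : ∀ s ∈ S, rconv s ∈ S
  inter_const : ∀ r ∈ S, ∀ s ∈ S, ∀ t ∈ S, ∀ p ∈ t, ∀ q ∈ t,
    ({γ : Ω | (p.1, γ) ∈ r ∧ (γ, p.2) ∈ s}).ncard
      = ({γ : Ω | (q.1, γ) ∈ r ∧ (γ, q.2) ∈ s}).ncard

/-- The valency of a basis relation (the common size of the rows over the left support). -/
noncomputable def valency {Ω : Type*} (s : Set (Ω × Ω)) : ℕ :=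
  sSup ((fun α => ({β | (α, β) ∈ s} : Set Ω).ncard) '' {α | ∃ β, (α, β) ∈ s})

def IsThick {Ω : Type*} (X : CohCfg Ω) : Prop :=
  ∀ s ∈ X.S, Disjoint s (rdiag Ω) → ¬(valency s = 1 ∧ valency (rconv s) = 1)

def IsParabolic {Ω : Type*} (X : CohCfg Ω) (e : Set (Ω × Ω)) : Prop :=
  IsEquivRel e ∧ ∀ s ∈ X.S, (s ∩ e).Nonempty → s ⊆ e

def Perp {Ω : Type*} (X : CohCfg Ω) (e f : Set (Ω × Ω)) : Prop :=
  ∀ x ∈ X.S, x ⊆ e → ∀ y ∈ X.S, y ⊆ f → (rcomp x y).Nonempty → rcomp x y ∈ X.S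

def Redundant {Ω : Type*} (X : CohCfg Ω) (s : Set (Ω × Ω)) : Prop :=
  ∃ x ∈ X.S, ∃ y ∈ X.S, Disjoint x (rdiag Ω) ∧ Disjoint y (rdiag Ω) ∧
    s = rcomp x y ∧ eqvClosure x ∩ eqvClosure y = rdiag Ω
/-- if `e` commutes with `r` and `s`, then `ρ(r·s) = ρ(r)·ρ(s)`. -/
theorem stmt3 {Ω : Type*} [Fintype Ω] (e : Setoid Ω) (r s : Set (Ω × Ω))
    (hr : rcomp (setoidRel e) r = rcomp r (setoidRel e))
    (hs : rcomp (setoidRel e) s = rcomp s (setoidRel e)) :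
    qmap e (rcomp r s) = rcomp (qmap e r) (qmap e s) := by
  ext ⟨x, y⟩
  constructor
  · rintro ⟨a, b, ha, hb, γ, har, hgs⟩
    exact ⟨Quotient.mk e γ, ⟨a, γ, ha, rfl, har⟩, ⟨γ, b, rfl, hb, hgs⟩⟩
  · rintro ⟨z, ⟨a, γ₁, ha, hγ₁, har⟩, ⟨γ₂, b, hγ₂, hb, hbs⟩⟩
    have hγ : e.r γ₁ γ₂ := Quotient.exact (hγ₁.trans hγ₂.symm)
    have h1 : (a, γ₂) ∈ rcomp r (setoidRel e) := ⟨γ₁, har, hγ⟩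
    rw [← hr] at h1
    obtain ⟨δ, haδ, hδγ⟩ := h1
    refine ⟨δ, b, ?_, hb, γ₂, hδγ, hbs⟩
    rw [← ha]
    exact (Quotient.sound haδ).symm
end

section
/- Let P = {e_1,…,e_m} be a set of pairwise commuting equivalence relations on a finite set Ω, and for I ⊆ {1,…,m} let P_I denote the composition (equivalently, join) of all e_i with i ∈ I (with P_∅ the diagonal). Assume that for every i, e_i ∧ P_{M∖{i}} is the diagonal, where M = {1,…,m}. Then for all I, J ⊆ M, P_I ∧ P_J = P_{I∩J}. In particular, the map I ↦ P_I is a lattice isomorphism from the Boolean lattice 2^M onto {P_I : I ⊆ M}. -/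
open Set

section StmtSixAux

variable {Ω : Type*}

lemma rdiag_isEquiv : IsEquivRel (rdiag Ω) :=
  ⟨fun _ => rfl, fun h => h.symm, fun h h' => h.trans h'⟩

lemma rdiag_subset_of_equiv {g : Set (Ω × Ω)} (hg : IsEquivRel g) : rdiag Ω ⊆ g := by
  rintro ⟨a, b⟩ (h : a = b); subst h; exact hg.refl a

lemma eqvClosure_isEquiv (r : Set (Ω × Ω)) : IsEquivRel (eqvClosure r) := by
  refine ⟨fun a => ?_, fun {a b} h => ?_, fun {a b c} h h' => ?_⟩
  · exact Set.mem_sInter.mpr fun t ht => ht.1.refl a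
  · exact Set.mem_sInter.mpr fun t ht => ht.1.symm (Set.mem_sInter.mp h t ht)
  · exact Set.mem_sInter.mpr fun t ht =>
      ht.1.trans (Set.mem_sInter.mp h t ht) (Set.mem_sInter.mp h' t ht)

lemma subset_eqvClosure (r : Set (Ω × Ω)) : r ⊆ eqvClosure r :=
  fun p hp => Set.mem_sInter.mpr fun _ ht => ht.2 hp

lemma eqvClosure_le {r g : Set (Ω × Ω)} (hg : IsEquivRel g) (h : r ⊆ g) :
    eqvClosure r ⊆ g :=
  Set.sInter_subset_of_mem ⟨hg, h⟩

lemma eqvClosure_mono {r s : Set (Ω × Ω)} (h : r ⊆ s) : eqvClosure r ⊆ eqvClosure s :=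
  eqvClosure_le (eqvClosure_isEquiv s) (h.trans (subset_eqvClosure s))

lemma rcomp_assoc (r s t : Set (Ω × Ω)) : rcomp (rcomp r s) t = rcomp r (rcomp s t) := by
  ext ⟨a, b⟩
  constructor
  · rintro ⟨γ, ⟨δ, h1, h2⟩, h3⟩; exact ⟨δ, h1, γ, h2, h3⟩
  · rintro ⟨γ, h1, δ, h2, h3⟩; exact ⟨δ, ⟨γ, h1, h2⟩, h3⟩

lemma rdiag_rcomp (r : Set (Ω × Ω)) : rcomp (rdiag Ω) r = r := by
  ext ⟨a, b⟩
  constructor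
  · rintro ⟨γ, (h1 : a = γ), h2⟩; subst h1; exact h2
  · intro h; exact ⟨a, rfl, h⟩

lemma rcomp_isEquiv {e f : Set (Ω × Ω)} (he : IsEquivRel e) (hf : IsEquivRel f)
    (h : rcomp e f = rcomp f e) : IsEquivRel (rcomp e f) := by
  refine ⟨fun a => ⟨a, he.refl a, hf.refl a⟩, fun {a b} hab => ?_, fun {a b c} hab hbc => ?_⟩
  · obtain ⟨γ, h1, h2⟩ := hab
    rw [h]; exact ⟨γ, hf.symm h2, he.symm h1⟩
  · obtain ⟨γ, h1, h2⟩ := hab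
    obtain ⟨δ, h3, h4⟩ := hbc
    have : (γ, δ) ∈ rcomp e f := by rw [h]; exact ⟨b, h2, h3⟩
    obtain ⟨η, h5, h6⟩ := this
    exact ⟨η, he.trans h1 h5, hf.trans h6 h4⟩

lemma union_subset_rcomp {e f : Set (Ω × Ω)} (he : IsEquivRel e) (hf : IsEquivRel f) :
    e ∪ f ⊆ rcomp e f := by
  rintro ⟨a, b⟩ (hp | hp)
  · exact ⟨b, hp, hf.refl b⟩
  · exact ⟨a, he.refl a, hp⟩

lemma rcomp_eq_eqvClosure_union {e f : Set (Ω × Ω)} (he : IsEquivRel e) (hf : IsEquivRel f)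
    (h : rcomp e f = rcomp f e) : rcomp e f = eqvClosure (e ∪ f) := by
  apply subset_antisymm
  · rintro ⟨a, b⟩ ⟨γ, h1, h2⟩
    exact (eqvClosure_isEquiv (e ∪ f)).trans
      (subset_eqvClosure _ (Or.inl h1)) (subset_eqvClosure _ (Or.inr h2))
  · exact eqvClosure_le (rcomp_isEquiv he hf h) (union_subset_rcomp he hf)

variable {m : ℕ} (e : Fin m → Set (Ω × Ω))

lemma PP_isEquiv (I : Set (Fin m)) : IsEquivRel (PP e I) := eqvClosure_isEquiv _

lemma PP_empty : PP e ∅ = rdiag Ω := by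
  apply subset_antisymm
  · refine eqvClosure_le rdiag_isEquiv ?_
    simp
  · exact rdiag_subset_of_equiv (PP_isEquiv e ∅)

lemma PP_mono {I J : Set (Fin m)} (h : I ⊆ J) : PP e I ⊆ PP e J :=
  eqvClosure_mono (Set.biUnion_mono h fun _ _ => subset_rfl)

lemma PP_insert_eq_closure (i : Fin m) (K : Set (Fin m)) :
    PP e (insert i K) = eqvClosure (e i ∪ PP e K) := by
  unfold PP
  rw [Set.biUnion_insert]
  apply subset_antisymm
  · exact eqvClosure_mono (Set.union_subset_union_right _ (subset_eqvClosure _))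
  · refine eqvClosure_le (eqvClosure_isEquiv _) (Set.union_subset ?_ ?_)
    · exact subset_trans Set.subset_union_left (subset_eqvClosure _)
    · exact eqvClosure_mono Set.subset_union_right

variable (he : ∀ i, IsEquivRel (e i))
    (hcomm : ∀ i j, rcomp (e i) (e j) = rcomp (e j) (e i))

include he hcomm in
lemma comm_e_PP : ∀ (K : Set (Fin m)) (j : Fin m),
    rcomp (e j) (PP e K) = rcomp (PP e K) (e j) := by
  intro K
  refine Set.Finite.induction_on
    (motive := fun K _ => ∀ j : Fin m, rcomp (e j) (PP e K) = rcomp (PP e K) (e j))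
    K (Set.toFinite K) ?_ ?_
  · intro j
    rw [PP_empty]
    ext ⟨a, b⟩
    constructor
    · rintro ⟨γ, h1, (h2 : γ = b)⟩; subst h2; exact ⟨a, rfl, h1⟩
    · rintro ⟨γ, (h1 : a = γ), h2⟩; subst h1; exact ⟨b, h2, rfl⟩
  · intro i K ha hKfin IH
    have hins : PP e (insert i K) = rcomp (e i) (PP e K) :=
      (PP_insert_eq_closure e i K).trans
        (rcomp_eq_eqvClosure_union (he i) (PP_isEquiv e K) (IH i)).symm
    intro j
    rw [hins, ← rcomp_assoc, hcomm j i, rcomp_assoc, IH j, ← rcomp_assoc]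

include he hcomm in
lemma PP_insert (i : Fin m) (K : Set (Fin m)) :
    PP e (insert i K) = rcomp (e i) (PP e K) :=
  (PP_insert_eq_closure e i K).trans
    (rcomp_eq_eqvClosure_union (he i) (PP_isEquiv e K) (comm_e_PP e he hcomm K i)).symm

include he hcomm in
lemma PP_union : ∀ I J : Set (Fin m), PP e (I ∪ J) = rcomp (PP e I) (PP e J) := by
  intro I
  refine Set.Finite.induction_on
    (motive := fun I _ => ∀ J : Set (Fin m), PP e (I ∪ J) = rcomp (PP e I) (PP e J))
    I (Set.toFinite I) ?_ ?_
  · intro J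
    rw [Set.empty_union, PP_empty, rdiag_rcomp]
  · intro i I ha hIfin IH
    intro J
    rw [Set.insert_union, PP_insert e he hcomm, IH, PP_insert e he hcomm, rcomp_assoc]

variable (hmeet : ∀ i, e i ∩ PP e ({i}ᶜ) = rdiag Ω)

include he hcomm hmeet in
lemma PP_disjoint : ∀ K L : Set (Fin m), Disjoint K L → PP e K ∩ PP e L ⊆ rdiag Ω := by
  intro K
  refine Set.Finite.induction_on
    (motive := fun K _ => ∀ L : Set (Fin m), Disjoint K L → PP e K ∩ PP e L ⊆ rdiag Ω)
    K (Set.toFinite K) ?_ ?_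
  · intro L _
    rw [PP_empty]
    exact Set.inter_subset_left
  · intro i K ha hKfin IH
    intro L hdisj
    rintro ⟨α, β⟩ ⟨h1, h2⟩
    rw [PP_insert e he hcomm] at h1
    obtain ⟨γ, hg1, hg2⟩ := h1
    have hiL : i ∉ L := fun hiL =>
      (Set.disjoint_left.mp hdisj (Set.mem_insert i K)) hiL
    have hib : (γ, β) ∈ PP e (insert i L) := by
      rw [PP_insert e he hcomm]
      exact ⟨α, (he i).symm hg1, h2⟩
    have hdisj' : Disjoint K (insert i L) := Set.disjoint_left.mpr fun x hx hx' => by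
      rcases hx' with rfl | hxL
      · exact ha hx
      · exact Set.disjoint_left.mp hdisj (Set.mem_insert_of_mem i hx) hxL
    have hgb : γ = β := IH (insert i L) hdisj' ⟨hg2, hib⟩
    rw [hgb] at hg1
    have hmem : (α, β) ∈ e i ∩ PP e ({i}ᶜ) :=
      ⟨hg1, PP_mono e (fun x hx => fun (hxi : x = i) => hiL (hxi ▸ hx)) h2⟩
    rw [hmeet i] at hmem
    exact hmem

end StmtSixAux

/-- for pairwise commuting equivalence relations with
`e_i ∧ P_{M∖{i}} = 1_Ω`, one has `P_I ∧ P_J = P_{I∩J}` for all `I, J`. -/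
theorem stmt6 {Ω : Type*} [Fintype Ω] {m : ℕ} (e : Fin m → Set (Ω × Ω))
    (he : ∀ i, IsEquivRel (e i))
    (hcomm : ∀ i j, rcomp (e i) (e j) = rcomp (e j) (e i))
    (hmeet : ∀ i, e i ∩ PP e ({i}ᶜ) = rdiag Ω) :
    ∀ I J : Set (Fin m), PP e I ∩ PP e J = PP e (I ∩ J) := by
  intro I J
  apply subset_antisymm
  · rintro ⟨α, β⟩ ⟨hI, hJ⟩
    have hIdecomp : PP e I = rcomp (PP e (I \ J)) (PP e (I ∩ J)) := by
      rw [← PP_union e he hcomm, Set.diff_union_inter]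
    rw [hIdecomp] at hI
    obtain ⟨γ, h1, h2⟩ := hI
    have h3 : (α, γ) ∈ PP e J :=
      (PP_isEquiv e J).trans hJ
        ((PP_isEquiv e J).symm (PP_mono e Set.inter_subset_right h2))
    have hag : α = γ :=
      PP_disjoint e he hcomm hmeet (I \ J) J Set.disjoint_sdiff_left ⟨h1, h3⟩
    exact hag ▸ h2
  · exact Set.subset_inter (PP_mono e Set.inter_subset_left)
      (PP_mono e Set.inter_subset_right)
end

section
/- Let 𝒳 be a thick coherent configuration on a finite set Ω, and let e, f be parabolics of 𝒳 with e ⊥ f (meaning that for all basis relations x ⊆ e and y ⊆ f, if x·y ≠ ∅ then x·y is a basis relation). Then e ∧ f = 1_Ω. -/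
open Set

lemma val_one {Ω : Type*} (s : Set (Ω × Ω)) (hne : s.Nonempty)
    (h : ∀ α β γ, (α, β) ∈ s → (α, γ) ∈ s → β = γ) : valency s = 1 := by
  have himg : (fun α => ({β | (α, β) ∈ s} : Set Ω).ncard) '' {α | ∃ β, (α, β) ∈ s}
      = {1} := by
    ext n
    simp only [Set.mem_image, Set.mem_setOf_eq, Set.mem_singleton_iff]
    constructor
    · rintro ⟨α, ⟨β, hβ⟩, rfl⟩
      have hrow : {β' | (α, β') ∈ s} = {β} := by
        ext γ
        simp only [Set.mem_setOf_eq, Set.mem_singleton_iff]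
        exact ⟨fun hγ => h α γ β hγ hβ, fun hγ => hγ ▸ hβ⟩
      rw [hrow]; exact Set.ncard_singleton β
    · rintro rfl
      obtain ⟨⟨α, β⟩, hp⟩ := hne
      refine ⟨α, ⟨β, hp⟩, ?_⟩
      have hrow : {β' | (α, β') ∈ s} = {β} := by
        ext γ
        simp only [Set.mem_setOf_eq, Set.mem_singleton_iff]
        exact ⟨fun hγ => h α γ β hγ hp, fun hγ => hγ ▸ hp⟩
      rw [hrow]; exact Set.ncard_singleton β
  unfold valency
  rw [himg, csSup_singleton]

/-- in a thick coherent configuration, `e ⊥ f` implies `e ∧ f = 1_Ω`. -/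
theorem stmt12 {Ω : Type*} [Fintype Ω] (X : CohCfg Ω) (hX : IsThick X)
    (e f : Set (Ω × Ω)) (he : IsParabolic X e) (hf : IsParabolic X f)
    (hperp : Perp X e f) :
    e ∩ f = rdiag Ω := by
  ext ⟨α, β⟩
  simp only [Set.mem_inter_iff]
  constructor
  · rintro ⟨hae, haf⟩
    by_contra hne
    have hαβ : α ≠ β := fun h => hne h
    obtain ⟨x, hxS, hxmem⟩ := X.cover (α, β)
    have hxe : x ⊆ e := he.2 x hxS ⟨(α, β), hxmem, hae⟩
    have hxf : x ⊆ f := hf.2 x hxS ⟨(α, β), hxmem, haf⟩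
    have hxdiag : Disjoint x (rdiag Ω) := by
      rw [Set.disjoint_left]
      intro p hp hpd
      exact hαβ (X.diag_union x hxS ⟨p, hp, hpd⟩ hxmem)
    have hconvS : rconv x ∈ X.S := X.conv_mem x hxS
    have hconve : rconv x ⊆ e := fun p hp => he.1.symm (hxe hp)
    have hconvf : rconv x ⊆ f := fun p hp => hf.1.symm (hxf hp)
    -- x ∘ x* ∈ S and contains a diagonal point, hence ⊆ diag
    have h1ne : (rcomp x (rconv x)).Nonempty := ⟨(α, α), β, hxmem, hxmem⟩
    have h1S : rcomp x (rconv x) ∈ X.S := hperp x hxS hxe (rconv x) hconvS hconvf h1ne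
    have h1diag : rcomp x (rconv x) ⊆ rdiag Ω :=
      X.diag_union _ h1S ⟨(α, α), ⟨β, hxmem, hxmem⟩, rfl⟩
    have h2ne : (rcomp (rconv x) x).Nonempty := ⟨(β, β), α, hxmem, hxmem⟩
    have h2S : rcomp (rconv x) x ∈ X.S := hperp (rconv x) hconvS hconve x hxS hxf h2ne
    have h2diag : rcomp (rconv x) x ⊆ rdiag Ω :=
      X.diag_union _ h2S ⟨(β, β), ⟨α, hxmem, hxmem⟩, rfl⟩
    have hv1 : valency x = 1 := by
      refine val_one x ⟨(α, β), hxmem⟩ ?_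
      intro a b c hab hac
      exact h2diag (⟨a, hab, hac⟩ : (b, c) ∈ rcomp (rconv x) x)
    have hv2 : valency (rconv x) = 1 := by
      refine val_one (rconv x) ⟨(β, α), hxmem⟩ ?_
      intro a b c hab hac
      exact h1diag (⟨a, hab, hac⟩ : (b, c) ∈ rcomp x (rconv x))
    exact hX x hxS hxdiag ⟨hv1, hv2⟩
  · intro h
    have : α = β := h
    subst this
    exact ⟨he.1.refl α, hf.1.refl α⟩
end

section
/- Let 𝒳 = (Ω,S) be a coherent configuration, and let s, x, y ∈ S be basis relations with x, y irreflexive, s = x·y, and ⟨x⟩ ∧ ⟨y⟩ = 1_Ω, where ⟨r⟩ denotes the smallest equivalence relation containing r. Then the valency of s satisfies n_s = n_x · n_y. -/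
open Set

lemma eqvClosure_of_left {Ω : Type*} {r : Set (Ω × Ω)} {a c c' : Ω}
    (h1 : (a, c) ∈ r) (h2 : (a, c') ∈ r) : (c, c') ∈ eqvClosure r := by
  rw [eqvClosure, Set.mem_sInter]
  rintro e ⟨he, hr⟩
  exact he.trans (he.symm (hr h1)) (hr h2)

lemma eqvClosure_of_right {Ω : Type*} {r : Set (Ω × Ω)} {a a' c : Ω}
    (h1 : (a, c) ∈ r) (h2 : (a', c) ∈ r) : (a, a') ∈ eqvClosure r := by
  rw [eqvClosure, Set.mem_sInter]
  rintro e ⟨he, hr⟩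
  exact he.trans (hr h1) (he.symm (hr h2))

lemma row_const {Ω : Type*} [Fintype Ω] (X : CohCfg Ω) {s : Set (Ω × Ω)} (hs : s ∈ X.S)
    {α β α' β' : Ω} (h : (α, β) ∈ s) (h' : (α', β') ∈ s) :
    ({δ | (α, δ) ∈ s} : Set Ω).ncard = ({δ | (α', δ) ∈ s} : Set Ω).ncard := by
  obtain ⟨t, ht, hαt⟩ := X.cover (α, α)
  have htd : t ⊆ rdiag Ω := X.diag_union t ht ⟨(α, α), hαt, rfl⟩
  -- show (α', α') ∈ t
  have hc := X.inter_const t ht s hs s hs (α, β) h (α', β') h'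
  have hne : ({γ : Ω | (α', γ) ∈ t ∧ (γ, β') ∈ s} : Set Ω).Nonempty := by
    rw [Set.nonempty_iff_ne_empty]
    intro he
    rw [he, Set.ncard_empty] at hc
    have h0 := (Set.ncard_eq_zero (Set.toFinite _)).mp hc
    exact absurd (h0 ▸ (⟨hαt, h⟩ : α ∈ {γ : Ω | (α, γ) ∈ t ∧ (γ, β) ∈ s}))
      (Set.notMem_empty α)
  obtain ⟨γ, hγ1, _⟩ := hne
  have hγα : α' = γ := htd hγ1
  have hα't : (α', α') ∈ t := by cases hγα; exact hγ1
  have hc2 := X.inter_const s hs (rconv s) (X.conv_mem s hs) t ht (α, α) hαt (α', α') hα't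
  have key : ∀ a : Ω, {γ : Ω | (a, γ) ∈ s ∧ (γ, a) ∈ rconv s} = {δ : Ω | (a, δ) ∈ s} := by
    intro a
    ext δ
    simp [rconv]
  rw [key α, key α'] at hc2
  exact hc2

lemma valency_eq_row {Ω : Type*} [Fintype Ω] (X : CohCfg Ω) {s : Set (Ω × Ω)} (hs : s ∈ X.S)
    {α β : Ω} (h : (α, β) ∈ s) :
    valency s = ({δ | (α, δ) ∈ s} : Set Ω).ncard := by
  unfold valency
  have himg : ((fun a => ({δ | (a, δ) ∈ s} : Set Ω).ncard) '' {a | ∃ b, (a, b) ∈ s})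
      = {({δ | (α, δ) ∈ s} : Set Ω).ncard} := by
    ext n
    simp only [Set.mem_image, Set.mem_setOf_eq, Set.mem_singleton_iff]
    constructor
    · rintro ⟨a, ⟨b, hab⟩, rfl⟩
      exact row_const X hs hab h
    · rintro rfl
      exact ⟨α, ⟨β, h⟩, rfl⟩
  rw [himg, csSup_singleton]

/-- if `s = x·y` with `x, y` irreflexive and `⟨x⟩ ∧ ⟨y⟩ = 1_Ω`,
then `n_s = n_x · n_y`. -/
theorem stmt13 {Ω : Type*} [Fintype Ω] (X : CohCfg Ω) (s x y : Set (Ω × Ω))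
    (hs : s ∈ X.S) (hx : x ∈ X.S) (hy : y ∈ X.S)
    (hxi : Disjoint x (rdiag Ω)) (hyi : Disjoint y (rdiag Ω))
    (hcomp : s = rcomp x y)
    (hmeet : eqvClosure x ∩ eqvClosure y = rdiag Ω) :
    valency s = valency x * valency y := by
  classical
  have hsne : s.Nonempty :=
    Set.nonempty_iff_ne_empty.2 (fun h => X.empty_not_mem (h ▸ hs))
  obtain ⟨⟨α, β₀⟩, hαβ⟩ := hsne
  have hαβ' : (α, β₀) ∈ rcomp x y := by rw [← hcomp]; exact hαβ
  obtain ⟨γ₀, hαγ₀, hγ₀β⟩ := hαβ'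
  -- all rows of y over α's x-row have size valency y
  have hyrow : ∀ γ : Ω, (α, γ) ∈ x →
      ({δ | (γ, δ) ∈ y} : Set Ω).ncard = valency y := by
    intro γ hγ
    have hγ₀c : (γ₀, α) ∈ rconv x := hαγ₀
    have hγc : (γ, α) ∈ rconv x := hγ
    have hc := X.inter_const y hy (rconv s) (X.conv_mem s hs) (rconv x) (X.conv_mem x hx)
      (γ₀, α) hγ₀c (γ, α) hγc
    have key : ∀ γ' : Ω, (α, γ') ∈ x →
        {δ : Ω | (γ', δ) ∈ y ∧ (δ, α) ∈ rconv s} = {δ : Ω | (γ', δ) ∈ y} := by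
      intro γ' hγ'
      ext δ
      simp only [Set.mem_setOf_eq, and_iff_left_iff_imp]
      intro hδ
      show (α, δ) ∈ s
      rw [hcomp]
      exact ⟨γ', hγ', hδ⟩
    rw [key γ₀ hαγ₀, key γ hγ] at hc
    rw [valency_eq_row X hy hγ₀β]
    exact hc.symm
  -- disjointness of the y-rows
  have hdisj : ∀ γ ∈ ({γ | (α, γ) ∈ x} : Set Ω).toFinset,
      ∀ γ' ∈ ({γ | (α, γ) ∈ x} : Set Ω).toFinset, γ ≠ γ' →
      Disjoint (({δ | (γ, δ) ∈ y} : Set Ω).toFinset)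
        (({δ | (γ', δ) ∈ y} : Set Ω).toFinset) := by
    intro γ hγ γ' hγ' hne
    rw [Set.mem_toFinset] at hγ hγ'
    rw [Finset.disjoint_left]
    intro δ h1 h2
    rw [Set.mem_toFinset] at h1 h2
    have hex : (γ, γ') ∈ eqvClosure x ∩ eqvClosure y :=
      ⟨eqvClosure_of_left hγ hγ', eqvClosure_of_right h1 h2⟩
    rw [hmeet] at hex
    exact hne hex
  -- the s-row is the disjoint union of the y-rows
  have hunion : ({δ | (α, δ) ∈ s} : Set Ω).toFinset
      = (({γ | (α, γ) ∈ x} : Set Ω).toFinset).biUnion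
          (fun γ => ({δ | (γ, δ) ∈ y} : Set Ω).toFinset) := by
    ext δ
    simp only [Set.mem_toFinset, Set.mem_setOf_eq, Finset.mem_biUnion, hcomp, rcomp]
  have hcard := Finset.card_biUnion hdisj
  rw [← hunion] at hcard
  have hsum : ∑ γ ∈ ({γ | (α, γ) ∈ x} : Set Ω).toFinset,
      (({δ | (γ, δ) ∈ y} : Set Ω).toFinset).card
      = (({γ | (α, γ) ∈ x} : Set Ω).toFinset).card * valency y := by
    rw [Finset.sum_congr rfl (fun γ hγ => ?_), Finset.sum_const, smul_eq_mul]
    rw [← Set.ncard_eq_toFinset_card']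
    exact hyrow γ (by simpa using hγ)
  rw [valency_eq_row X hs hαβ, valency_eq_row X hx hαγ₀,
    Set.ncard_eq_toFinset_card', Set.ncard_eq_toFinset_card', hcard, hsum]
end
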